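/- For every integer d ≥ 1, the formal power series 1/((1−x)^{d+1} − x^{d+1}) − 1/(1−2x) has nonnegative coefficients. -/

import Mathlib

open PowerSeries

/-- `cc d N r` = sum of binomial coefficients `C(N,j)` over `j ≡ r (mod d+1)`,
defined by the Pascal recurrence. -/
def cc (d : ℕ) : ℕ → ℕ → ℤ
  | 0, r => if r = 0 then 1 else 0
  | N+1, r => cc d N r + cc d N ((r + d) % (d+1))

lemma cc_nonneg (d : ℕ) : ∀ N r, 0 ≤ cc d N r := by
  intro N
  induction N with
  | zero => intro r; simp [cc]; split <;> norm_num
  | succ N ih => intro r; simpa [cc] using add_nonneg (ih r) (ih _)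

lemma cc_pos (d : ℕ) : ∀ N r, r ≤ N → 1 ≤ cc d N r := by
  intro N
  induction N with
  | zero => intro r hr; simp [Nat.le_zero.mp hr, cc]
  | succ N ih =>
    intro r hr
    rcases Nat.lt_or_ge r (N+1) with h | h
    · have := ih r (Nat.lt_succ_iff.mp h)
      have h2 := cc_nonneg d N ((r + d) % (d+1))
      simp only [cc]; linarith
    · have hr' : r = N + 1 := le_antisymm hr h
      subst hr'
      have hm : ((N + 1) + d) % (d+1) = N % (d+1) := by
        rw [show (N + 1) + d = N + (d + 1) from by omega, Nat.add_mod_right]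
      have h1 := ih (N % (d+1)) (Nat.mod_le N (d+1))
      have h2 := cc_nonneg d N (N+1)
      simp only [cc, hm]; linarith

lemma cc_zero_of_lt (d : ℕ) : ∀ N r, r ≤ d → N < r → cc d N r = 0 := by
  intro N
  induction N with
  | zero => intro r _ hr; simp only [cc, if_neg (show r ≠ 0 by omega)]
  | succ N ih =>
    intro r hrd hr
    have h1 : 1 ≤ r := by omega
    have hm : (r + d) % (d+1) = r - 1 := by
      have : r + d = (r - 1) + (d + 1) := by omega
      rw [this, Nat.add_mod_right, Nat.mod_eq_of_lt (by omega)]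
    simp only [cc, hm, ih r hrd (by omega), ih (r-1) (by omega) (by omega), add_zero]

lemma cc_ge (d : ℕ) : ∀ N, d ≤ N → ∀ r, r ≤ d → (2:ℤ)^(N-d) ≤ cc d N r := by
  intro N hN
  induction N, hN using Nat.le_induction with
  | base => intro r hr; simpa using cc_pos d d r hr
  | succ N hN ih =>
    intro r hr
    have h1 := ih r hr
    have h2 := ih ((r+d)%(d+1)) (Nat.lt_succ_iff.mp (Nat.mod_lt _ (by omega)))
    have h3 : N + 1 - d = (N - d) + 1 := by omega
    simp only [cc, h3, pow_succ]
    linarith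

noncomputable def FF (d r : ℕ) : PowerSeries ℤ := PowerSeries.mk (fun N => cc d N r)

lemma FF_eq (d r : ℕ) : FF d r = X * FF d r + X * FF d ((r+d)%(d+1))
    + PowerSeries.C (if r = 0 then 1 else 0) := by
  ext n
  cases n with
  | zero => simp [FF, cc, coeff_C]
  | succ n =>
    simp [FF, coeff_succ_X_mul, cc, coeff_C]
    split <;> simp

lemma FF_rec (d r : ℕ) : (1 - X) * FF d r = X * FF d ((r+d)%(d+1))
    + PowerSeries.C (if r = 0 then 1 else 0) := by
  linear_combination FF_eq d r

lemma step_eq (d : ℕ) : ∀ k, k ≤ d → (1 - X)^k * FF d d = X^k * FF d (d - k) := by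
  intro k
  induction k with
  | zero => simp
  | succ k ih =>
    intro hk
    have h1 : d - k ≠ 0 := by omega
    have h2 : ((d - k) + d) % (d+1) = d - (k+1) := by
      rw [show (d - k) + d = (d - (k+1)) + (d + 1) from by omega, Nat.add_mod_right,
        Nat.mod_eq_of_lt (by omega)]
    have h3 := FF_rec d (d - k)
    rw [h2, if_neg h1, map_zero, add_zero] at h3
    calc (1 - X)^(k+1) * FF d d = (1 - X) * ((1 - X)^k * FF d d) := by ring
    _ = (1 - X) * (X^k * FF d (d - k)) := by rw [ih (by omega)]
    _ = X^k * ((1 - X) * FF d (d - k)) := by ring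
    _ = X^(k+1) * FF d (d - (k+1)) := by rw [h3]; ring

lemma main_eq (d : ℕ) : ((1 - X)^(d+1) - X^(d+1)) * FF d d = X^d := by
  have h1 := step_eq d d le_rfl
  have h2 := FF_rec d 0
  rw [if_pos rfl, Nat.zero_add, Nat.mod_eq_of_lt (by omega), map_one] at h2
  calc ((1 - X)^(d+1) - X^(d+1)) * FF d d
      = (1 - X) * ((1 - X)^d * FF d d) - X^(d+1) * FF d d := by ring
    _ = X^d * ((1 - X) * FF d (d - d)) - X^(d+1) * FF d d := by rw [h1]; ring
    _ = X^d * (X * FF d d + 1) - X^(d+1) * FF d d := by rw [Nat.sub_self, h2]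
    _ = X^d := by ring

theorem delta_nonneg (d : ℕ) (hd : 1 ≤ d) (A B : PowerSeries ℤ)
    (hA : A * ((1 - PowerSeries.X) ^ (d + 1) - PowerSeries.X ^ (d + 1)) = 1)
    (hB : B * (1 - 2 * PowerSeries.X) = 1) :
    ∀ n, PowerSeries.coeff n B ≤ PowerSeries.coeff n A := by
  -- A equals the explicit series
  set f : PowerSeries ℤ := (1 - X)^(d+1) - X^(d+1) with hf
  have hfc : PowerSeries.constantCoeff f = 1 := by
    simp [hf]
  have hfne : f ≠ 0 := fun h => by simp [h] at hfc
  set A₀ : PowerSeries ℤ := PowerSeries.mk (fun n => cc d (n+d) d) with hA₀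
  have hFA : FF d d = X^d * A₀ := by
    ext n
    rw [coeff_X_pow_mul']
    split_ifs with h
    · simp [FF, hA₀, Nat.sub_add_cancel h]
    · simpa [FF] using cc_zero_of_lt d n d le_rfl (by omega)
  have hA0f : A₀ * f = 1 := by
    have h1 : X^d * (f * A₀) = X^d * 1 := by
      rw [mul_one]
      calc X^d * (f * A₀) = f * (X^d * A₀) := by ring
        _ = f * FF d d := by rw [hFA]
        _ = X^d := by rw [hf]; linear_combination main_eq d
    have hX : (X : PowerSeries ℤ)^d ≠ 0 := pow_ne_zero _ PowerSeries.X_ne_zero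
    rw [mul_comm A₀ f]
    exact mul_left_cancel₀ hX h1
  have hAeq : A = A₀ := mul_right_cancel₀ hfne (hA.trans hA0f.symm)
  -- B equals the explicit series
  set B₀ : PowerSeries ℤ := PowerSeries.mk (fun n => (2:ℤ)^n) with hB₀
  have hB0g : B₀ * (1 - 2 * X) = 1 := by
    have h2 : B₀ * (1 - 2 * X) = B₀ - (X * B₀ + X * B₀) := by ring
    rw [h2]
    ext n
    cases n with
    | zero => simp [hB₀]
    | succ n =>
      simp [hB₀, coeff_succ_X_mul, pow_succ]
      ring
  have hgne : (1 - 2 * X : PowerSeries ℤ) ≠ 0 := by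
    intro h
    have : PowerSeries.constantCoeff (1 - 2 * X : PowerSeries ℤ) = 1 := by simp
    simp [h] at this
  have hBeq : B = B₀ := mul_right_cancel₀ hgne (hB.trans hB0g.symm)
  intro n
  rw [hAeq, hBeq, hA₀, hB₀, coeff_mk, coeff_mk]
  simpa using cc_ge d (n+d) (by omega) d le_rfl
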